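/- For every integer i ≥ 2 and every real number ε with 0 ≤ ε < 10/(9i), there exists a finite set P ⊂ ℝ² such that for every subset Q ⊆ P with |Q| ≤ i there exists an axis-parallel rectangle R with R ∩ Q = ∅ and |R ∩ P| > ε·|P|. Hence ε_i^R ≥ 10/(9i) for all i ≥ 2. -/

import Mathlib

set_option maxRecDepth 4000

/-- An axis-parallel rectangle in ℝ²: a product of closed intervals. -/
def IsRect (R : Set (EuclideanSpace ℝ (Fin 2))) : Prop :=
  ∃ a b c d : ℝ, R = {x | a ≤ x 0 ∧ x 0 ≤ b ∧ c ≤ x 1 ∧ x 1 ≤ d}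

def gyA : ℕ → ℕ := fun t => [2,3,5,1,0,8,7,6,4].getD t 0
def gyC : ℕ → ℕ := fun t => [2,1,5,7,9,6,0,8,4,3].getD t 0

abbrev Box := ℕ × ℕ × ℕ × ℕ

def boxesA : List Box := [(0,6,2,8),(0,8,0,4),(0,8,2,6),(0,8,3,7),(0,8,4,8),(1,5,0,8),
  (2,6,0,8),(2,7,0,7),(2,8,0,6),(3,7,0,8),(3,8,1,8),(4,8,0,8)]
def boxesC : List Box := [(0,4,2,9),(0,5,0,6),(0,5,2,7),(0,7,6,9),(0,8,0,4),(0,9,0,3),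
  (0,9,1,4),(0,9,3,6),(1,4,0,9),(1,6,0,6),(1,9,0,4),(2,9,0,5),(3,9,0,6),(4,7,0,9),(6,9,0,8)]

def inBox (gy : ℕ → ℕ) (B : Box) (t : ℕ) : Prop :=
  B.1 ≤ t ∧ t ≤ B.2.1 ∧ B.2.2.1 ≤ gy t ∧ gy t ≤ B.2.2.2

instance (gy : ℕ → ℕ) (B : Box) (t : ℕ) : Decidable (inBox gy B t) := by
  unfold inBox; infer_instance

lemma gadgetA' : ∀ a b : Fin 9, ∃ B ∈ boxesA,
    5 ≤ (Finset.univ.filter (fun t : Fin 9 => inBox gyA B t.val)).card ∧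
      ¬ inBox gyA B a.val ∧ ¬ inBox gyA B b.val := by decide

lemma gadgetC' : ∀ a b c : Fin 10, ∃ B ∈ boxesC,
    4 ≤ (Finset.univ.filter (fun t : Fin 10 => inBox gyC B t.val)).card ∧
      ¬ inBox gyC B a.val ∧ ¬ inBox gyC B b.val ∧ ¬ inBox gyC B c.val := by decide

lemma exists_pair_superset {α : Type*} [DecidableEq α] [Nonempty α]
    (S : Finset α) (h : S.card ≤ 2) : ∃ a b, S ⊆ {a, b} := by
  rcases S.eq_empty_or_nonempty with h0 | ⟨a, ha⟩
  · inhabit α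
    exact ⟨default, default, by simp [h0]⟩
  · have h' : (S.erase a).card ≤ 1 := by
      have := Finset.card_erase_of_mem ha; omega
    obtain ⟨b, hb⟩ := Finset.card_le_one_iff_subset_singleton.mp h'
    refine ⟨a, b, fun x hx => ?_⟩
    rcases eq_or_ne x a with rfl | hxa
    · simp
    · have := hb (Finset.mem_erase.mpr ⟨hxa, hx⟩)
      simp only [Finset.mem_singleton] at this
      simp [this]

lemma exists_triple_superset {α : Type*} [DecidableEq α] [Nonempty α]
    (S : Finset α) (h : S.card ≤ 3) : ∃ a b c, S ⊆ {a, b, c} := by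
  rcases S.eq_empty_or_nonempty with h0 | ⟨a, ha⟩
  · inhabit α
    exact ⟨default, default, default, by simp [h0]⟩
  · have h' : (S.erase a).card ≤ 2 := by
      have := Finset.card_erase_of_mem ha; omega
    obtain ⟨b, c, hbc⟩ := exists_pair_superset _ h'
    refine ⟨a, b, c, fun x hx => ?_⟩
    rcases eq_or_ne x a with rfl | hxa
    · simp
    · have := hbc (Finset.mem_erase.mpr ⟨hxa, hx⟩)
      simp only [Finset.mem_insert, Finset.mem_singleton] at this
      rcases this with rfl | rfl <;> simp

lemma gadgetA : ∀ S : Finset (Fin 9), S.card ≤ 2 → ∃ B ∈ boxesA,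
    5 ≤ (Finset.univ.filter (fun t : Fin 9 => inBox gyA B t.val)).card ∧
      ∀ t ∈ S, ¬ inBox gyA B t.val := by
  intro S hS
  obtain ⟨a, b, hab⟩ := exists_pair_superset S hS
  obtain ⟨B, hBL, hc, hna, hnb⟩ := gadgetA' a b
  refine ⟨B, hBL, hc, fun t ht => ?_⟩
  have := hab ht
  simp only [Finset.mem_insert, Finset.mem_singleton] at this
  rcases this with rfl | rfl <;> assumption

lemma gadgetC : ∀ S : Finset (Fin 10), S.card ≤ 3 → ∃ B ∈ boxesC,
    4 ≤ (Finset.univ.filter (fun t : Fin 10 => inBox gyC B t.val)).card ∧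
      ∀ t ∈ S, ¬ inBox gyC B t.val := by
  intro S hS
  obtain ⟨a, b, c, habc⟩ := exists_triple_superset S hS
  obtain ⟨B, hBL, hc, hna, hnb, hnc⟩ := gadgetC' a b c
  refine ⟨B, hBL, hc, fun t ht => ?_⟩
  have := habc ht
  simp only [Finset.mem_insert, Finset.mem_singleton] at this
  rcases this with rfl | rfl | rfl <;> assumption

/-- The point `(x, y)` of `ℝ²` with natural-number coordinates. -/
def pt (x y : ℕ) : EuclideanSpace ℝ (Fin 2) :=
  WithLp.toLp 2 (fun i : Fin 2 => if i.val = 0 then (x : ℝ) else (y : ℝ))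

@[simp] lemma pt_apply0 (x y : ℕ) : pt x y 0 = (x : ℝ) := rfl
@[simp] lemma pt_apply1 (x y : ℕ) : pt x y 1 = (y : ℝ) := rfl

lemma construction (i : ℕ) (ε : ℝ) (hε0 : 0 ≤ ε)
    (N c m k : ℕ) (hN : 1 ≤ N) (hN10 : N ≤ 10) (hk : 1 ≤ k)
    (gy : ℕ → ℕ) (hgy : ∀ t, gy t ≤ 9)
    (L : List Box) (hL : ∀ B ∈ L, B.1 ≤ 9 ∧ B.2.1 ≤ 9 ∧ B.2.2.1 ≤ 9 ∧ B.2.2.2 ≤ 9)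
    (hpig : i < (c + 1) * k)
    (hprop : ∀ S : Finset (Fin N), S.card ≤ c → ∃ B ∈ L,
        m ≤ (Finset.univ.filter (fun t : Fin N => inBox gy B t.val)).card ∧
        ∀ t ∈ S, ¬ inBox gy B t.val)
    (hbound : ε * ((k * N : ℕ) : ℝ) < (m : ℝ)) :
    ∃ P : Finset (EuclideanSpace ℝ (Fin 2)),
      ∀ Q : Finset (EuclideanSpace ℝ (Fin 2)), Q ⊆ P → Q.card ≤ i →
        ∃ R : Set (EuclideanSpace ℝ (Fin 2)), IsRect R ∧ (∀ q ∈ Q, q ∉ R) ∧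
          ε * P.card < ((R ∩ ↑P).ncard : ℝ) := by
  classical
  set F : Fin k × Fin N → EuclideanSpace ℝ (Fin 2) :=
    fun v => pt (100 * v.1.val + v.2.val) (100 * v.1.val + gy v.2.val) with hF
  have hFinj : Function.Injective F := by
    rintro ⟨j, t⟩ ⟨j', t'⟩ h
    have h0 := congrArg (fun x : EuclideanSpace ℝ (Fin 2) => x 0) h
    have h1 := congrArg (fun x : EuclideanSpace ℝ (Fin 2) => x 1) h
    simp only [hF, pt_apply0, pt_apply1] at h0 h1
    have e0 : 100 * j.val + t.val = 100 * j'.val + t'.val := by exact_mod_cast h0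
    have e1 : 100 * j.val + gy t.val = 100 * j'.val + gy t'.val := by exact_mod_cast h1
    have ht : t.val < N := t.isLt
    have ht' : t'.val < N := t'.isLt
    have hjj : j.val = j'.val ∧ t.val = t'.val := by omega
    ext
    · exact hjj.1
    · exact hjj.2
  refine ⟨Finset.image F Finset.univ, ?_⟩
  intro Q hQP hQi
  have hcard : (Finset.image F Finset.univ).card = k * N := by
    rw [Finset.card_image_of_injective _ hFinj, Finset.card_univ]
    simp
  -- index function
  set g : EuclideanSpace ℝ (Fin 2) → Fin k × Fin N :=
    fun q => if h : ∃ v, F v = q then h.choose else (⟨0, hk⟩, ⟨0, hN⟩) with hgdef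
  have hg : ∀ q ∈ Q, F (g q) = q := by
    intro q hq
    have : ∃ v, F v = q := by
      obtain ⟨v, -, hv⟩ := Finset.mem_image.mp (hQP hq)
      exact ⟨v, hv⟩
    simp only [hgdef, dif_pos this]
    exact this.choose_spec
  -- pigeonhole
  have hsum : ∑ j : Fin k, (Q.filter fun q => (g q).1 = j).card = Q.card :=
    (Finset.card_eq_sum_card_fiberwise (fun q _ => Finset.mem_univ ((g q).1))).symm
  have hex : ∃ j : Fin k, (Q.filter fun q => (g q).1 = j).card ≤ c := by
    by_contra hcon
    push_neg at hcon
    have hge : ∀ j : Fin k, c + 1 ≤ (Q.filter fun q => (g q).1 = j).card :=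
      fun j => hcon j
    have : (c + 1) * k ≤ Q.card := by
      calc (c + 1) * k = ∑ _j : Fin k, (c + 1) := by
            rw [Finset.sum_const, Finset.card_univ, Fintype.card_fin, smul_eq_mul, mul_comm]
        _ ≤ ∑ j : Fin k, (Q.filter fun q => (g q).1 = j).card :=
            Finset.sum_le_sum fun j _ => hge j
        _ = Q.card := hsum
    omega
  obtain ⟨j, hj⟩ := hex
  set S : Finset (Fin N) := (Q.filter fun q => (g q).1 = j).image fun q => (g q).2 with hSdef
  have hScard : S.card ≤ c := le_trans Finset.card_image_le hj
  obtain ⟨B, hBL, hBcount, hBavoid⟩ := hprop S hScard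
  obtain ⟨hB1, hB2, hB3, hB4⟩ := hL B hBL
  set R : Set (EuclideanSpace ℝ (Fin 2)) :=
    {x | ((100 * j.val + B.1 : ℕ) : ℝ) ≤ x 0 ∧ x 0 ≤ ((100 * j.val + B.2.1 : ℕ) : ℝ) ∧
         ((100 * j.val + B.2.2.1 : ℕ) : ℝ) ≤ x 1 ∧ x 1 ≤ ((100 * j.val + B.2.2.2 : ℕ) : ℝ)}
    with hRdef
  have hmemR : ∀ v : Fin k × Fin N, F v ∈ R ↔
      (100 * j.val + B.1 ≤ 100 * v.1.val + v.2.val ∧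
       100 * v.1.val + v.2.val ≤ 100 * j.val + B.2.1 ∧
       100 * j.val + B.2.2.1 ≤ 100 * v.1.val + gy v.2.val ∧
       100 * v.1.val + gy v.2.val ≤ 100 * j.val + B.2.2.2) := by
    intro v
    simp only [hRdef, hF, Set.mem_setOf_eq, pt_apply0, pt_apply1]
    constructor
    · rintro ⟨a1, a2, a3, a4⟩
      exact ⟨by exact_mod_cast a1, by exact_mod_cast a2, by exact_mod_cast a3,
        by exact_mod_cast a4⟩
    · rintro ⟨a1, a2, a3, a4⟩
      exact ⟨by exact_mod_cast a1, by exact_mod_cast a2, by exact_mod_cast a3,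
        by exact_mod_cast a4⟩
  refine ⟨R, ⟨_, _, _, _, rfl⟩, ?_, ?_⟩
  · -- Q avoids R
    intro q hq hqR
    have hFq : F (g q) = q := hg q hq
    rw [← hFq] at hqR
    rw [hmemR] at hqR
    obtain ⟨a1, a2, a3, a4⟩ := hqR
    have htN : (g q).2.val < N := (g q).2.isLt
    have hgy2 : gy (g q).2.val ≤ 9 := hgy _
    have hjeq : (g q).1.val = j.val := by omega
    have hjeq' : (g q).1 = j := Fin.ext hjeq
    have hmemS : (g q).2 ∈ S := by
      rw [hSdef]
      exact Finset.mem_image.mpr ⟨q, Finset.mem_filter.mpr ⟨hq, hjeq'⟩, rfl⟩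
    have := hBavoid _ hmemS
    apply this
    refine ⟨by omega, by omega, by omega, by omega⟩
  · -- count
    set T : Finset (Fin N) := Finset.univ.filter (fun t : Fin N => inBox gy B t.val) with hTdef
    set G : Finset (EuclideanSpace ℝ (Fin 2)) := T.image fun t => F (j, t) with hGdef
    have hGsub : (↑G : Set (EuclideanSpace ℝ (Fin 2))) ⊆ R ∩ ↑(Finset.image F Finset.univ) := by
      intro x hx
      simp only [hGdef, Finset.coe_image, Set.mem_image, Finset.mem_coe] at hx
      obtain ⟨t, ht, rfl⟩ := hx
      have htB : inBox gy B t.val := (Finset.mem_filter.mp ht).2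
      obtain ⟨b1, b2, b3, b4⟩ := htB
      constructor
      · rw [hmemR]
        dsimp only
        exact ⟨by omega, by omega, by omega, by omega⟩
      · exact Finset.mem_coe.mpr (Finset.mem_image.mpr ⟨(j, t), Finset.mem_univ _, rfl⟩)
    have hGcard : G.card = T.card := by
      rw [hGdef]
      apply Finset.card_image_of_injective
      intro t t' htt
      have := hFinj htt
      exact (Prod.mk.injEq _ _ _ _ ▸ this).2
    have hfin : (R ∩ ↑(Finset.image F Finset.univ)).Finite :=
      Set.Finite.subset (Finset.image F Finset.univ).finite_toSet Set.inter_subset_right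
    have hm : m ≤ (R ∩ ↑(Finset.image F Finset.univ)).ncard := by
      have h1 : m ≤ G.card := by rw [hGcard]; exact hBcount
      have h2 : G.card ≤ (R ∩ ↑(Finset.image F Finset.univ)).ncard := by
        rw [← Set.ncard_coe_finset]
        exact Set.ncard_le_ncard hGsub hfin
      omega
    rw [hcard]
    calc ε * ((k * N : ℕ) : ℝ) < (m : ℝ) := hbound
      _ ≤ _ := by exact_mod_cast hm

/-- Lower bound: for every `i ≥ 2`, no strong ε-net of size `i` with `ε < 10/(9i)` exists
for axis-parallel rectangles, i.e. `ε_i^R ≥ 10/(9i)`. -/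
theorem epsR_general_lower (i : ℕ) (hi : 2 ≤ i) (ε : ℝ) (hε0 : 0 ≤ ε)
    (hε : ε < 10 / (9 * i)) :
    ∃ P : Finset (EuclideanSpace ℝ (Fin 2)),
      ∀ Q : Finset (EuclideanSpace ℝ (Fin 2)), Q ⊆ P → Q.card ≤ i →
        ∃ R : Set (EuclideanSpace ℝ (Fin 2)), IsRect R ∧ (∀ q ∈ Q, q ∉ R) ∧
          ε * P.card < ((R ∩ ↑P).ncard : ℝ) := by
  have hgyA : ∀ t, gyA t ≤ 9 := by
    intro t
    by_cases h : t < 9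
    · interval_cases t <;> decide
    · unfold gyA
      rw [List.getD_eq_default]
      · omega
      · simpa using by omega
  have hgyC : ∀ t, gyC t ≤ 9 := by
    intro t
    by_cases h : t < 10
    · interval_cases t <;> decide
    · unfold gyC
      rw [List.getD_eq_default]
      · omega
      · simpa using by omega
  by_cases hi3 : i = 3
  · subst hi3
    apply construction 3 ε hε0 10 3 4 1 (by norm_num) le_rfl le_rfl gyC hgyC boxesC
      (by decide) (by norm_num) gadgetC
    have h27 : ε < 10 / 27 := by
      convert hε using 2
      norm_num
    push_cast
    nlinarith
  · apply construction i ε hε0 9 2 5 (i / 2) (by norm_num) (by norm_num) (by omega) gyA hgyA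
      boxesA (by decide) (by omega) gadgetA
    have hipos : (0 : ℝ) < 9 * (i : ℝ) := by positivity
    have h10 : ε * (9 * (i : ℝ)) < 10 := (lt_div_iff₀ hipos).mp hε
    have h2k : (2 * ((i / 2 : ℕ) : ℝ)) ≤ (i : ℝ) := by
      have : 2 * (i / 2) ≤ i := by omega
      exact_mod_cast this
    push_cast
    nlinarith [mul_le_mul_of_nonneg_left h2k hε0]
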